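/- In the Gaussian simple mediation model with n ≥ 6, the third central moment of γ̂ = θ̂_x β̂_m conditional on x equals 6 θ_x β_m σ_u² / ((n-4) x'x); in particular the distribution of γ̂ is skewed (nonzero third central moment) if and only if θ_x β_m ≠ 0. -/

import Mathlib

open MeasureTheory ProbabilityTheory Real

/-- Density of the Student t distribution with `ν` degrees of freedom. -/
noncomputable def tPdf (ν t : ℝ) : ℝ :=
  Real.Gamma ((ν + 1) / 2) / (Real.sqrt (π * ν) * Real.Gamma (ν / 2)) *
    (1 + t ^ 2 / ν) ^ (-(ν + 1) / 2)

/-- Standard Student t distribution with `ν` degrees of freedom. -/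
noncomputable def tMeasure (ν : ℝ) : Measure ℝ :=
  volume.withDensity (fun t => ENNReal.ofReal (tPdf ν t))

section Aux

open Filter
open scoped ENNReal NNReal

lemma integral_odd_zero (f : ℝ → ℝ) (hf : ∀ x, f (-x) = - f x) : ∫ x, f x = 0 := by
  have h1 : ∫ x : ℝ, f (-x) = ∫ x, f x := integral_neg_eq_self f volume
  simp_rw [hf, integral_neg] at h1
  linarith

lemma integrable_pow_mul_q {ν : ℝ} (hν : 0 < ν) (k : ℕ) {r : ℝ}
    (hr : (k : ℝ) / 2 - r ≤ -1) :
    Integrable (fun t : ℝ => t ^ k * (1 + t ^ 2 / ν) ^ (-r)) := by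
  have hpos : ∀ t : ℝ, 0 < 1 + t ^ 2 / ν := fun t => by positivity
  have hint : Integrable (fun t : ℝ => (1 + t ^ 2 / ν)⁻¹) := by
    have h0 : Integrable (fun t : ℝ => (1 + ((Real.sqrt ν)⁻¹ * t) ^ 2)⁻¹) :=
      (integrable_comp_mul_left_iff (fun x : ℝ => (1 + x ^ 2)⁻¹)
        (inv_ne_zero (Real.sqrt_ne_zero'.2 hν))).2 integrable_inv_one_add_sq
    convert h0 using 2 with t
    rw [mul_pow, inv_pow, Real.sq_sqrt hν.le, div_eq_inv_mul]
  refine (hint.const_mul (ν ^ ((k : ℝ) / 2))).mono' ?_ (ae_of_all _ fun t => ?_)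
  · exact ((continuous_pow k).mul ((continuous_const.add
      ((continuous_pow 2).div_const ν)).rpow_const fun t => Or.inl (hpos t).ne')).aestronglyMeasurable
  · have h1 : |t| ^ k = (t ^ 2) ^ ((k : ℝ) / 2) := by
      rw [show ((k : ℝ) / 2) = (1/2) * (k : ℝ) by ring, Real.rpow_mul (sq_nonneg t),
        Real.rpow_natCast, ← Real.sqrt_eq_rpow, Real.sqrt_sq_eq_abs]
    have h2 : (t ^ 2 : ℝ) ≤ ν * (1 + t ^ 2 / ν) := by
      rw [mul_add, mul_one, mul_div_cancel₀ _ hν.ne']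
      nlinarith [sq_nonneg t]
    calc ‖t ^ k * (1 + t ^ 2 / ν) ^ (-r)‖
        = |t| ^ k * (1 + t ^ 2 / ν) ^ (-r) := by
          rw [norm_mul, norm_pow, Real.norm_eq_abs, Real.norm_eq_abs,
            abs_of_pos (Real.rpow_pos_of_pos (hpos t) _)]
      _ ≤ (ν * (1 + t ^ 2 / ν)) ^ ((k : ℝ) / 2) * (1 + t ^ 2 / ν) ^ (-r) := by
          have : |t| ^ k ≤ (ν * (1 + t ^ 2 / ν)) ^ ((k : ℝ) / 2) := by
            rw [h1]
            exact Real.rpow_le_rpow (sq_nonneg t) h2 (by positivity)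
          exact mul_le_mul_of_nonneg_right this (Real.rpow_pos_of_pos (hpos t) _).le
      _ = ν ^ ((k : ℝ) / 2) * (1 + t ^ 2 / ν) ^ ((k : ℝ) / 2 - r) := by
          rw [Real.mul_rpow hν.le (hpos t).le, mul_assoc, ← Real.rpow_add (hpos t)]
          ring_nf
      _ ≤ ν ^ ((k : ℝ) / 2) * (1 + t ^ 2 / ν)⁻¹ := by
          gcongr
          rw [← Real.rpow_neg_one]
          have hb : (1:ℝ) ≤ 1 + t ^ 2 / ν := by
            have : 0 ≤ t ^ 2 / ν := by positivity
            linarith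
          exact Real.rpow_le_rpow_of_exponent_le hb hr

lemma q_sq_rel {ν : ℝ} (hν : 4 ≤ ν) :
    ∫ t : ℝ, t ^ 2 * (1 + t ^ 2 / ν) ^ (-((ν + 1) / 2))
      = ν / (ν - 2) * ∫ t : ℝ, (1 + t ^ 2 / ν) ^ (-((ν + 1) / 2)) := by
  have hν0 : (0:ℝ) < ν := by linarith
  have hpos : ∀ t : ℝ, 0 < 1 + t ^ 2 / ν := fun t => by positivity
  set e : ℝ := -((ν - 1) / 2) with he
  have hd : ∀ t : ℝ, HasDerivAt (fun t : ℝ => t * (1 + t ^ 2 / ν) ^ e)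
      ((1 + t ^ 2 / ν) ^ e + t * (e * (1 + t ^ 2 / ν) ^ (e - 1) * (2 * t / ν))) t := by
    intro t
    have h1 : HasDerivAt (fun t : ℝ => 1 + t ^ 2 / ν) (2 * t / ν) t := by
      have := ((hasDerivAt_pow 2 t).div_const ν).const_add 1
      simpa using this
    have h2 := h1.rpow_const (p := e) (Or.inl (hpos t).ne')
    have := (hasDerivAt_id t).mul h2
    convert this using 1
    · rfl
    · rfl
    · funext y; simp
    · simp only [one_mul, id]; ring
  have hkey : ∀ t : ℝ,
      (1 + t ^ 2 / ν) ^ e + t * (e * (1 + t ^ 2 / ν) ^ (e - 1) * (2 * t / ν))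
        = (1 + t ^ 2 / ν) ^ (-((ν + 1) / 2))
          - (ν - 2) / ν * (t ^ 2 * (1 + t ^ 2 / ν) ^ (-((ν + 1) / 2))) := by
    intro t
    have hexp : e - 1 = -((ν + 1) / 2) := by rw [he]; ring
    have hsplit : (1 + t ^ 2 / ν) ^ e
        = (1 + t ^ 2 / ν) * (1 + t ^ 2 / ν) ^ (e - 1) := by
      nth_rewrite 1 [show e = 1 + (e - 1) by ring]
      rw [Real.rpow_add (hpos t), Real.rpow_one]
    rw [hsplit, hexp]
    field_simp
    ring
  have hF : Integrable (fun t : ℝ => t * (1 + t ^ 2 / ν) ^ e) := by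
    have := integrable_pow_mul_q hν0 1 (r := (ν - 1) / 2) (by push_cast; linarith)
    simpa [he] using this
  have hq : Integrable (fun t : ℝ => (1 + t ^ 2 / ν) ^ (-((ν + 1) / 2))) := by
    have := integrable_pow_mul_q hν0 0 (r := (ν + 1) / 2) (by push_cast; linarith)
    simpa using this
  have hq2 : Integrable (fun t : ℝ => t ^ 2 * (1 + t ^ 2 / ν) ^ (-((ν + 1) / 2))) :=
    integrable_pow_mul_q hν0 2 (r := (ν + 1) / 2) (by push_cast; linarith)
  have hF' : Integrable (fun t : ℝ =>
      (1 + t ^ 2 / ν) ^ e + t * (e * (1 + t ^ 2 / ν) ^ (e - 1) * (2 * t / ν))) := by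
    have : Integrable (fun t : ℝ => (1 + t ^ 2 / ν) ^ (-((ν + 1) / 2))
        - (ν - 2) / ν * (t ^ 2 * (1 + t ^ 2 / ν) ^ (-((ν + 1) / 2)))) :=
      hq.sub (hq2.const_mul _)
    exact this.congr (ae_of_all _ fun t => (hkey t).symm)
  have hzero : ∫ t : ℝ, ((1 + t ^ 2 / ν) ^ e
      + t * (e * (1 + t ^ 2 / ν) ^ (e - 1) * (2 * t / ν))) = 0 :=
    integral_eq_zero_of_hasDerivAt_of_integrable hd hF' hF
  rw [integral_congr_ae (ae_of_all _ hkey), integral_sub hq (hq2.const_mul _),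
    integral_const_mul] at hzero
  have hne : ν - 2 ≠ 0 := by linarith
  have hνne : ν ≠ 0 := hν0.ne'
  field_simp at hzero ⊢
  linarith [hzero]

lemma tPdf_pos {ν : ℝ} (hν : 0 < ν) (t : ℝ) : 0 < tPdf ν t := by
  have h1 : 0 < Real.Gamma ((ν + 1) / 2) := Real.Gamma_pos_of_pos (by linarith)
  have h2 : 0 < Real.Gamma (ν / 2) := Real.Gamma_pos_of_pos (by linarith)
  have h3 : 0 < Real.sqrt (π * ν) := Real.sqrt_pos.2 (by positivity)
  have h4 : (0:ℝ) < 1 + t ^ 2 / ν := by positivity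
  have := Real.rpow_pos_of_pos h4 (-(ν + 1) / 2)
  unfold tPdf; positivity

lemma tPdf_nonneg {ν : ℝ} (hν : 0 < ν) (t : ℝ) : 0 ≤ tPdf ν t := (tPdf_pos hν t).le

lemma continuous_tPdf {ν : ℝ} (hν : 0 < ν) : Continuous (tPdf ν) := by
  unfold tPdf
  exact continuous_const.mul ((continuous_const.add
    ((continuous_pow 2).div_const ν)).rpow_const fun t => Or.inl (ne_of_gt (by show 0 < 1 + t ^ 2 / ν; have : 0 ≤ t ^ 2 / ν := div_nonneg (sq_nonneg t) hν.le; linarith)))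

lemma tPdf_even {ν : ℝ} (t : ℝ) : tPdf ν (-t) = tPdf ν t := by
  simp [tPdf, neg_pow]

lemma tPdf_eq {ν : ℝ} (t : ℝ) : tPdf ν t
    = Real.Gamma ((ν + 1) / 2) / (Real.sqrt (π * ν) * Real.Gamma (ν / 2)) *
      (1 + t ^ 2 / ν) ^ (-((ν + 1) / 2)) := by
  rw [tPdf, neg_div]

lemma integrable_pow_mul_tPdf {ν : ℝ} (hν : 4 ≤ ν) {k : ℕ} (hk : k ≤ 3) :
    Integrable (fun t : ℝ => t ^ k * tPdf ν t) := by
  have hν0 : (0:ℝ) < ν := by linarith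
  have hk3 : (k:ℝ) ≤ 3 := by exact_mod_cast hk
  have := (integrable_pow_mul_q hν0 k (r := (ν + 1) / 2) (by linarith)).const_mul
    (Real.Gamma ((ν + 1) / 2) / (Real.sqrt (π * ν) * Real.Gamma (ν / 2)))
  refine this.congr (ae_of_all _ fun t => ?_)
  simp only [tPdf_eq]; ring

lemma integral_pow_mul_tPdf_odd {ν : ℝ} {k : ℕ} (hk : Odd k) :
    ∫ t : ℝ, t ^ k * tPdf ν t = 0 := by
  refine integral_odd_zero _ fun t => ?_
  rw [tPdf_even, hk.neg_pow, neg_mul]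

lemma integral_sq_mul_tPdf {ν : ℝ} (hν : 4 ≤ ν) :
    ∫ t : ℝ, t ^ 2 * tPdf ν t = ν / (ν - 2) * ∫ t : ℝ, tPdf ν t := by
  set C := Real.Gamma ((ν + 1) / 2) / (Real.sqrt (π * ν) * Real.Gamma (ν / 2)) with hC
  have h1 : (fun t : ℝ => t ^ 2 * tPdf ν t)
      = fun t : ℝ => C * (t ^ 2 * (1 + t ^ 2 / ν) ^ (-((ν + 1) / 2))) := by
    funext t; rw [tPdf_eq, ← hC]; ring
  have h2 : (fun t : ℝ => tPdf ν t)
      = fun t : ℝ => C * (1 + t ^ 2 / ν) ^ (-((ν + 1) / 2)) := by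
    funext t; rw [tPdf_eq, ← hC]
  rw [h1, h2, integral_const_mul, integral_const_mul, q_sq_rel hν]
  ring

lemma integral_withDensity_ofReal {p : ℝ → ℝ} (hp : Measurable p) (h0 : ∀ x, 0 ≤ p x)
    (g : ℝ → ℝ) :
    ∫ x, g x ∂(volume.withDensity fun x => ENNReal.ofReal (p x)) = ∫ x, p x * g x := by
  have h : (fun x => ENNReal.ofReal (p x)) = (fun x => ((p x).toNNReal : ℝ≥0∞)) := rfl
  rw [h, integral_withDensity_eq_integral_smul hp.real_toNNReal]
  congr 1 with x
  simp [NNReal.smul_def, Real.coe_toNNReal _ (h0 x)]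

lemma integrable_withDensity_ofReal {p : ℝ → ℝ} (hp : Measurable p) (h0 : ∀ x, 0 ≤ p x)
    (g : ℝ → ℝ) :
    Integrable g (volume.withDensity fun x => ENNReal.ofReal (p x))
      ↔ Integrable (fun x => p x * g x) := by
  have h : (fun x => ENNReal.ofReal (p x)) = (fun x => ((p x).toNNReal : ℝ≥0∞)) := rfl
  rw [h, integrable_withDensity_iff_integrable_smul hp.real_toNNReal]
  constructor <;> intro h' <;> refine h'.congr (ae_of_all _ fun x => ?_) <;>
    simp [NNReal.smul_def, Real.coe_toNNReal _ (h0 x)]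

lemma integrable_pow_mul_exp {b : ℝ} (hb : 0 < b) (k : ℕ) :
    Integrable (fun x : ℝ => x ^ k * Real.exp (-b * x ^ 2)) := by
  have := integrable_rpow_mul_exp_neg_mul_sq hb (s := (k : ℝ))
    (by have : (0:ℝ) ≤ (k:ℝ) := Nat.cast_nonneg k; linarith)
  refine this.congr (ae_of_all _ fun x => ?_)
  simp only [Real.rpow_natCast]

lemma integrable_pow_mul_gaussianPDFReal {v : ℝ≥0} (hv : v ≠ 0) (k : ℕ) :
    Integrable (fun x : ℝ => x ^ k * gaussianPDFReal 0 v x) := by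
  have hv0 : (0:ℝ) < (v:ℝ) := lt_of_le_of_ne v.coe_nonneg (by exact_mod_cast (Ne.symm hv))
  have hb : (0:ℝ) < (2*(v:ℝ))⁻¹ := by positivity
  have := (integrable_pow_mul_exp hb k).const_mul (Real.sqrt (2 * π * v))⁻¹
  refine this.congr (ae_of_all _ fun x => ?_)
  simp only [gaussianPDFReal]
  rw [show -(2*(v:ℝ))⁻¹ * x ^ 2 = -(x - 0)^2/(2*(v:ℝ)) by field_simp; ring]
  ring

lemma integral_pow_mul_gaussianPDFReal_odd {v : ℝ≥0} {k : ℕ} (hk : Odd k) :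
    ∫ x : ℝ, x ^ k * gaussianPDFReal 0 v x = 0 := by
  refine integral_odd_zero _ fun x => ?_
  have h : gaussianPDFReal 0 v (-x) = gaussianPDFReal 0 v x := by
    simp [gaussianPDFReal, neg_pow]
  rw [h, hk.neg_pow, neg_mul]

lemma integral_sq_mul_gaussianPDFReal {v : ℝ≥0} (hv : v ≠ 0) :
    ∫ x : ℝ, x ^ 2 * gaussianPDFReal 0 v x = v := by
  have hv0 : (0:ℝ) < (v:ℝ) := lt_of_le_of_ne v.coe_nonneg (by exact_mod_cast (Ne.symm hv))
  have hb : (0:ℝ) < (2*(v:ℝ))⁻¹ := by positivity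
  set b : ℝ := (2*(v:ℝ))⁻¹ with hbdef
  have hd : ∀ x : ℝ, HasDerivAt (fun x : ℝ => x * Real.exp (-b * x ^ 2))
      (Real.exp (-b * x ^ 2) + x * (Real.exp (-b * x ^ 2) * (-b * (2 * x)))) x := by
    intro x
    have h1 : HasDerivAt (fun x : ℝ => -b * x ^ 2) (-b * (2 * x)) x := by
      have := (hasDerivAt_pow 2 x).const_mul (-b)
      simpa [mul_comm, mul_assoc] using this
    have h2 := h1.exp
    have := (hasDerivAt_id x).mul h2
    convert this using 1
    · rfl
    · rfl
    · funext y; simp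
    · simp only [one_mul, id]
  have hF : Integrable (fun x : ℝ => x * Real.exp (-b * x ^ 2)) := by
    simpa using integrable_pow_mul_exp hb 1
  have hkey : ∀ x : ℝ, Real.exp (-b * x ^ 2) + x * (Real.exp (-b * x ^ 2) * (-b * (2 * x)))
      = Real.exp (-b * x ^ 2) - 2 * b * (x ^ 2 * Real.exp (-b * x ^ 2)) := fun x => by ring
  have h0 : Integrable (fun x : ℝ => Real.exp (-b * x ^ 2)) := by
    simpa using integrable_pow_mul_exp hb 0
  have hF' : Integrable (fun x : ℝ => Real.exp (-b * x ^ 2)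
      + x * (Real.exp (-b * x ^ 2) * (-b * (2 * x)))) := by
    have : Integrable (fun x : ℝ => Real.exp (-b * x ^ 2)
        - 2 * b * (x ^ 2 * Real.exp (-b * x ^ 2))) :=
      h0.sub ((integrable_pow_mul_exp hb 2).const_mul _)
    exact this.congr (ae_of_all _ fun x => (hkey x).symm)
  have hzero := integral_eq_zero_of_hasDerivAt_of_integrable hd hF' hF
  rw [integral_congr_ae (ae_of_all _ hkey),
    integral_sub h0 ((integrable_pow_mul_exp hb 2).const_mul _), integral_const_mul] at hzero
  have hrel : ∫ x : ℝ, x ^ 2 * Real.exp (-b * x ^ 2) = v * ∫ x : ℝ, Real.exp (-b * x ^ 2) := by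
    have h2b : 2 * b ≠ 0 := by positivity
    have hveq : (v:ℝ) = (2*b)⁻¹ := by rw [hbdef]; field_simp
    rw [hveq]
    field_simp at hzero ⊢
    linarith [hzero]
  have hpdf : ∀ x : ℝ, gaussianPDFReal 0 v x
      = (Real.sqrt (2 * π * v))⁻¹ * Real.exp (-b * x ^ 2) := by
    intro x
    simp only [gaussianPDFReal]
    rw [show -b * x ^ 2 = -(x - 0)^2/(2*(v:ℝ)) by rw [hbdef]; field_simp; ring]
  have hone : ∫ x : ℝ, gaussianPDFReal 0 v x = 1 := integral_gaussianPDFReal_eq_one 0 hv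
  have hone' : (Real.sqrt (2 * π * v))⁻¹ * ∫ x : ℝ, Real.exp (-b * x ^ 2) = 1 := by
    rw [← integral_const_mul, ← hone]
    exact integral_congr_ae (ae_of_all _ fun x => ((hpdf x).symm))
  have hgoal : ∫ x : ℝ, x ^ 2 * gaussianPDFReal 0 v x
      = (Real.sqrt (2 * π * v))⁻¹ * ∫ x : ℝ, x ^ 2 * Real.exp (-b * x ^ 2) := by
    rw [← integral_const_mul]
    congr 1 with x
    rw [hpdf]; ring
  rw [hgoal, hrel, show (Real.sqrt (2 * π * v))⁻¹ * ((v:ℝ) * ∫ x : ℝ, Real.exp (-b * x ^ 2))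
    = (v:ℝ) * ((Real.sqrt (2 * π * v))⁻¹ * ∫ x : ℝ, Real.exp (-b * x ^ 2)) by ring, hone',
    mul_one]

end Aux
section Aux2
open Filter
open scoped ENNReal NNReal

variable {v : ℝ≥0}

lemma gauss_shift (hv : v ≠ 0) (μ x : ℝ) :
    gaussianPDFReal μ v (x + μ) = gaussianPDFReal 0 v x := by
  rw [gaussianPDFReal_add, sub_self]

lemma integrable_pow_mul_gaussianPDFReal' (hv : v ≠ 0) (μ : ℝ) (k : ℕ) :
    Integrable (fun x : ℝ => x ^ k * gaussianPDFReal μ v x) := by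
  have hcomb : Integrable (fun y : ℝ => (y + μ) ^ k * gaussianPDFReal 0 v y) := by
    have e : ∀ y : ℝ, (y + μ) ^ k * gaussianPDFReal 0 v y
        = ∑ i ∈ Finset.range (k + 1),
            (μ ^ (k - i) * (k.choose i : ℝ)) * (y ^ i * gaussianPDFReal 0 v y) := by
      intro y
      rw [add_pow, Finset.sum_mul]
      exact Finset.sum_congr rfl fun i _ => by ring
    refine (integrable_finset_sum _ fun i _ =>
      (integrable_pow_mul_gaussianPDFReal hv i).const_mul _).congr
      (ae_of_all _ fun y => (e y).symm)
  have h2 := hcomb.comp_sub_right μ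
  refine h2.congr (ae_of_all _ fun x => ?_)
  simp only [sub_add_cancel]
  rw [gaussianPDFReal_sub, zero_add]

lemma integral_mul_gaussianPDFReal (hv : v ≠ 0) (μ : ℝ) :
    ∫ x : ℝ, x * gaussianPDFReal μ v x = μ := by
  rw [← integral_add_right_eq_self (fun x => x * gaussianPDFReal μ v x) μ]
  simp only [gauss_shift hv]
  have e : ∀ x : ℝ, (x + μ) * gaussianPDFReal 0 v x
      = x * gaussianPDFReal 0 v x + μ * gaussianPDFReal 0 v x := fun x => by ring
  rw [integral_congr_ae (ae_of_all _ e),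
    integral_add (by simpa using integrable_pow_mul_gaussianPDFReal hv 1)
      ((integrable_gaussianPDFReal 0 v).const_mul μ),
    integral_const_mul, integral_gaussianPDFReal_eq_one 0 hv]
  have := integral_pow_mul_gaussianPDFReal_odd (v := v) (k := 1) (by decide)
  simp only [pow_one] at this
  rw [this]; ring

lemma integral_sq_mul_gaussianPDFReal' (hv : v ≠ 0) (μ : ℝ) :
    ∫ x : ℝ, x ^ 2 * gaussianPDFReal μ v x = (v : ℝ) + μ ^ 2 := by
  rw [← integral_add_right_eq_self (fun x => x ^ 2 * gaussianPDFReal μ v x) μ]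
  simp only [gauss_shift hv]
  have e : ∀ x : ℝ, (x + μ) ^ 2 * gaussianPDFReal 0 v x
      = x ^ 2 * gaussianPDFReal 0 v x
        + (2 * μ) * (x * gaussianPDFReal 0 v x) + μ ^ 2 * gaussianPDFReal 0 v x :=
    fun x => by ring
  have i2 := integrable_pow_mul_gaussianPDFReal hv 2
  have i1 : Integrable (fun x : ℝ => (2 * μ) * (x * gaussianPDFReal 0 v x)) :=
    ((by simpa using integrable_pow_mul_gaussianPDFReal hv 1 : Integrable
      (fun x : ℝ => x * gaussianPDFReal 0 v x))).const_mul (2 * μ)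
  have i0 : Integrable (fun x : ℝ => μ ^ 2 * gaussianPDFReal 0 v x) :=
    (integrable_gaussianPDFReal 0 v).const_mul (μ ^ 2)
  have i21 : Integrable (fun x : ℝ => x ^ 2 * gaussianPDFReal 0 v x
      + (2 * μ) * (x * gaussianPDFReal 0 v x)) := i2.add i1
  rw [integral_congr_ae (ae_of_all _ e), integral_add i21 i0, integral_add i2 i1,
    integral_const_mul, integral_const_mul, integral_gaussianPDFReal_eq_one 0 hv,
    integral_sq_mul_gaussianPDFReal hv]
  have h1 := integral_pow_mul_gaussianPDFReal_odd (v := v) (k := 1) (by decide)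
  simp only [pow_one] at h1
  rw [h1]; ring

lemma integral_cube_mul_gaussianPDFReal' (hv : v ≠ 0) (μ : ℝ) :
    ∫ x : ℝ, x ^ 3 * gaussianPDFReal μ v x = 3 * (v : ℝ) * μ + μ ^ 3 := by
  rw [← integral_add_right_eq_self (fun x => x ^ 3 * gaussianPDFReal μ v x) μ]
  simp only [gauss_shift hv]
  have e : ∀ x : ℝ, (x + μ) ^ 3 * gaussianPDFReal 0 v x
      = x ^ 3 * gaussianPDFReal 0 v x + (3 * μ) * (x ^ 2 * gaussianPDFReal 0 v x)
        + (3 * μ ^ 2) * (x * gaussianPDFReal 0 v x) + μ ^ 3 * gaussianPDFReal 0 v x :=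
    fun x => by ring
  have i3 := integrable_pow_mul_gaussianPDFReal hv 3
  have i2 : Integrable (fun x : ℝ => (3 * μ) * (x ^ 2 * gaussianPDFReal 0 v x)) :=
    (integrable_pow_mul_gaussianPDFReal hv 2).const_mul (3 * μ)
  have i1 : Integrable (fun x : ℝ => (3 * μ ^ 2) * (x * gaussianPDFReal 0 v x)) :=
    ((by simpa using integrable_pow_mul_gaussianPDFReal hv 1 : Integrable
      (fun x : ℝ => x * gaussianPDFReal 0 v x))).const_mul (3 * μ ^ 2)
  have i0 : Integrable (fun x : ℝ => μ ^ 3 * gaussianPDFReal 0 v x) :=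
    (integrable_gaussianPDFReal 0 v).const_mul (μ ^ 3)
  have i32 : Integrable (fun x : ℝ => x ^ 3 * gaussianPDFReal 0 v x
      + (3 * μ) * (x ^ 2 * gaussianPDFReal 0 v x)) := i3.add i2
  have i321 : Integrable (fun x : ℝ => x ^ 3 * gaussianPDFReal 0 v x
      + (3 * μ) * (x ^ 2 * gaussianPDFReal 0 v x)
      + (3 * μ ^ 2) * (x * gaussianPDFReal 0 v x)) := i32.add i1
  rw [integral_congr_ae (ae_of_all _ e),
    integral_add i321 i0, integral_add i32 i1, integral_add i3 i2,
    integral_const_mul, integral_const_mul, integral_const_mul,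
    integral_gaussianPDFReal_eq_one 0 hv, integral_sq_mul_gaussianPDFReal hv]
  have h1 := integral_pow_mul_gaussianPDFReal_odd (v := v) (k := 1) (by decide)
  simp only [pow_one] at h1
  have h3 := integral_pow_mul_gaussianPDFReal_odd (v := v) (k := 3) (by decide)
  rw [h1, h3]; ring

-- transfer lemmas
variable {Ω : Type*} [MeasurableSpace Ω] {Pr : Measure Ω}

lemma aemeasurable_of_map {X : Ω → ℝ} {μ : Measure ℝ} (h : Measure.map X Pr = μ)
    (hμ : μ ≠ 0) : AEMeasurable X Pr := by
  by_contra hX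
  rw [Measure.map_of_not_aemeasurable hX] at h
  exact hμ h.symm

lemma map_integral {X : Ω → ℝ} {μ : Measure ℝ} (h : Measure.map X Pr = μ)
    (hX : AEMeasurable X Pr) {f : ℝ → ℝ} (hf : AEStronglyMeasurable f μ) :
    ∫ ω, f (X ω) ∂Pr = ∫ x, f x ∂μ := by
  rw [← h] at hf ⊢
  exact (integral_map hX hf).symm

lemma map_integrable {X : Ω → ℝ} {μ : Measure ℝ} (h : Measure.map X Pr = μ)
    (hX : AEMeasurable X Pr) {f : ℝ → ℝ} (hf : AEStronglyMeasurable f μ) :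
    Integrable (fun ω => f (X ω)) Pr ↔ Integrable f μ := by
  rw [← h] at hf ⊢
  exact (integrable_map_measure hf hX).symm

lemma tMeasure_ne_zero {ν : ℝ} (hν : 0 < ν) : tMeasure ν ≠ 0 := by
  intro h
  have h1 : (tMeasure ν) Set.univ = 0 := by rw [h]; simp
  rw [tMeasure, withDensity_apply _ MeasurableSet.univ, setLIntegral_univ,
    lintegral_eq_zero_iff ((continuous_tPdf hν).measurable.ennreal_ofReal)] at h1
  have h2 : ∀ᵐ x : ℝ, False := by
    filter_upwards [h1] with x hx
    exact absurd hx (ENNReal.ofReal_pos.2 (tPdf_pos hν x)).ne'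
  obtain ⟨x, hx⟩ := h2.exists
  exact hx

end Aux2
open scoped ENNReal NNReal

/-- Third central moment of `γ̂ = θ̂ₓ β̂ₘ` equals `6 θₓ βₘ σᵤ²/((n-4) x'x)`; in
particular `γ̂` is skewed iff `θₓ βₘ ≠ 0`. -/
theorem stmt17 {Ω : Type*} [MeasurableSpace Ω] (Pr : Measure Ω) [IsProbabilityMeasure Pr]
    {n : ℕ} (hn : 6 ≤ n) (θx βm σu σv xx : ℝ) (hσu : 0 < σu) (hσv : 0 < σv)
    (hxx : 0 < xx)
    (θhat T : Ω → ℝ)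
    (hθ : Measure.map θhat Pr = gaussianReal θx (σv ^ 2 / xx).toNNReal)
    (hT : Measure.map T Pr = tMeasure ((n : ℝ) - 2))
    (hind : IndepFun θhat T Pr)
    (γhat : Ω → ℝ)
    (hγ : ∀ ω, γhat ω = θhat ω * (βm + σu / (σv * Real.sqrt ((n : ℝ) - 2)) * T ω)) :
    (∫ ω, (γhat ω - ∫ ω', γhat ω' ∂Pr) ^ 3 ∂Pr)
        = 6 * θx * βm * σu ^ 2 / (((n : ℝ) - 4) * xx)
      ∧ ((∫ ω, (γhat ω - ∫ ω', γhat ω' ∂Pr) ^ 3 ∂Pr) ≠ 0 ↔ θx * βm ≠ 0) := by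
  have hn6 : (6:ℝ) ≤ (n:ℝ) := by exact_mod_cast hn
  set ν : ℝ := (n:ℝ) - 2 with hνdef
  have hν4 : (4:ℝ) ≤ ν := by rw [hνdef]; linarith
  have hν0 : (0:ℝ) < ν := by linarith
  have hν2 : ν - 2 ≠ 0 := by intro h; rw [hνdef] at h; linarith
  set c : ℝ := σu / (σv * Real.sqrt ν) with hcdef
  have hc2 : c ^ 2 = σu ^ 2 / (σv ^ 2 * ν) := by
    rw [hcdef, div_pow, mul_pow, Real.sq_sqrt hν0.le]
  set v : ℝ≥0 := (σv ^ 2 / xx).toNNReal with hvdef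
  have hvpos : (0:ℝ) < σv ^ 2 / xx := by positivity
  have hvcoe : (v : ℝ) = σv ^ 2 / xx := Real.coe_toNNReal _ hvpos.le
  have hvne : v ≠ 0 := by
    intro h
    rw [h] at hvcoe
    simp at hvcoe
    linarith
  -- measurability
  have haeT : AEMeasurable T Pr := aemeasurable_of_map hT (tMeasure_ne_zero hν0)
  have haeθ : AEMeasurable θhat Pr := aemeasurable_of_map hθ (IsProbabilityMeasure.ne_zero _)
  -- total mass of tMeasure
  have hmeasp : Measurable (tPdf ν) := (continuous_tPdf hν0).measurable
  have hnon : ∀ t, 0 ≤ tPdf ν t := tPdf_nonneg hν0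
  have hprob : IsProbabilityMeasure (tMeasure ν) := by
    rw [← hT]; exact Measure.isProbabilityMeasure_map haeT
  have htot : ∫ t : ℝ, tPdf ν t = 1 := by
    have h1 : ∫ _t : ℝ, (1:ℝ) ∂(tMeasure ν) = 1 := by simp
    rw [tMeasure, integral_withDensity_ofReal hmeasp hnon] at h1
    simpa using h1
  -- moments of T over Pr
  have hTkey : ∀ k : ℕ, k ≤ 3 →
      Integrable (fun ω => T ω ^ k) Pr ∧
      (∫ ω, T ω ^ k ∂Pr) = ∫ t : ℝ, t ^ k * tPdf ν t := by
    intro k hk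
    have hsm : AEStronglyMeasurable (fun t : ℝ => t ^ k) (tMeasure ν) :=
      (continuous_pow k).aestronglyMeasurable
    constructor
    · rw [map_integrable hT haeT hsm, tMeasure, integrable_withDensity_ofReal hmeasp hnon]
      exact (integrable_pow_mul_tPdf hν4 hk).congr (ae_of_all _ fun t => by ring)
    · rw [map_integral hT haeT hsm, tMeasure, integral_withDensity_ofReal hmeasp hnon]
      exact integral_congr_ae (ae_of_all _ fun t => by ring)
  have hTint1 : Integrable (fun ω => T ω) Pr := by
    have := (hTkey 1 (by norm_num)).1; simpa using this
  have hTint2 : Integrable (fun ω => T ω ^ 2) Pr := (hTkey 2 (by norm_num)).1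
  have hTint3 : Integrable (fun ω => T ω ^ 3) Pr := (hTkey 3 (by norm_num)).1
  have hET1 : ∫ ω, T ω ∂Pr = 0 := by
    have h := (hTkey 1 (by norm_num)).2
    rw [integral_pow_mul_tPdf_odd (by decide)] at h
    simpa using h
  have hET2 : ∫ ω, T ω ^ 2 ∂Pr = ν / (ν - 2) := by
    rw [(hTkey 2 (by norm_num)).2, integral_sq_mul_tPdf hν4, htot, mul_one]
  have hET3 : ∫ ω, T ω ^ 3 ∂Pr = 0 := by
    rw [(hTkey 3 (by norm_num)).2, integral_pow_mul_tPdf_odd (by decide)]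
  -- moments of θhat over Pr
  have hgd : gaussianReal θx v
      = volume.withDensity fun x => ENNReal.ofReal (gaussianPDFReal θx v x) := by
    rw [gaussianReal_of_var_ne_zero θx hvne]; rfl
  have hgm : Measurable (gaussianPDFReal θx v) := measurable_gaussianPDFReal θx v
  have hgn : ∀ x, 0 ≤ gaussianPDFReal θx v x := gaussianPDFReal_nonneg θx v
  have hθkey : ∀ k : ℕ,
      Integrable (fun ω => θhat ω ^ k) Pr ∧
      (∫ ω, θhat ω ^ k ∂Pr) = ∫ x : ℝ, x ^ k * gaussianPDFReal θx v x := by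
    intro k
    have hsm : AEStronglyMeasurable (fun x : ℝ => x ^ k) (gaussianReal θx v) :=
      (continuous_pow k).aestronglyMeasurable
    constructor
    · rw [map_integrable hθ haeθ hsm, hgd, integrable_withDensity_ofReal hgm hgn]
      exact (integrable_pow_mul_gaussianPDFReal' hvne θx k).congr (ae_of_all _ fun t => by ring)
    · rw [map_integral hθ haeθ hsm, hgd, integral_withDensity_ofReal hgm hgn]
      exact integral_congr_ae (ae_of_all _ fun t => by ring)
  have hθint1 : Integrable (fun ω => θhat ω) Pr := by
    have := (hθkey 1).1; simpa using this
  have hθint2 : Integrable (fun ω => θhat ω ^ 2) Pr := (hθkey 2).1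
  have hθint3 : Integrable (fun ω => θhat ω ^ 3) Pr := (hθkey 3).1
  have hEθ1 : ∫ ω, θhat ω ∂Pr = θx := by
    have h := (hθkey 1).2
    rw [show ∫ x : ℝ, x ^ 1 * gaussianPDFReal θx v x
        = ∫ x : ℝ, x * gaussianPDFReal θx v x from integral_congr_ae
          (ae_of_all _ fun x => by ring), integral_mul_gaussianPDFReal hvne θx] at h
    simpa using h
  have hEθ2 : ∫ ω, θhat ω ^ 2 ∂Pr = (v:ℝ) + θx ^ 2 := by
    rw [(hθkey 2).2, integral_sq_mul_gaussianPDFReal' hvne θx]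
  have hEθ3 : ∫ ω, θhat ω ^ 3 ∂Pr = 3 * (v:ℝ) * θx + θx ^ 3 := by
    rw [(hθkey 3).2, integral_cube_mul_gaussianPDFReal' hvne θx]
  -- moments of B = βm + c T
  set mT2 : ℝ := ν / (ν - 2) with hmT2
  have hB1int : Integrable (fun ω => βm + c * T ω) Pr :=
    (integrable_const βm).add (hTint1.const_mul c)
  have hEB1 : ∫ ω, (βm + c * T ω) ∂Pr = βm := by
    rw [integral_add (integrable_const βm) (hTint1.const_mul c), integral_const,
      integral_const_mul, hET1]
    simp
  have hB2eq : ∀ ω, (βm + c * T ω) ^ 2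
      = βm ^ 2 + (2 * βm * c) * T ω + c ^ 2 * T ω ^ 2 := fun ω => by ring
  have i20 : Integrable (fun ω => βm ^ 2 + (2 * βm * c) * T ω) Pr :=
    (integrable_const _).add (hTint1.const_mul _)
  have hB2int : Integrable (fun ω => (βm + c * T ω) ^ 2) Pr := by
    exact (i20.add (hTint2.const_mul (c ^ 2))).congr (ae_of_all _ fun ω => (hB2eq ω).symm)
  have hEB2 : ∫ ω, (βm + c * T ω) ^ 2 ∂Pr = βm ^ 2 + c ^ 2 * mT2 := by
    rw [integral_congr_ae (ae_of_all _ hB2eq), integral_add i20 (hTint2.const_mul _),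
      integral_add (integrable_const _) (hTint1.const_mul _), integral_const,
      integral_const_mul, integral_const_mul, hET1, hET2]
    simp [hmT2]
    try ring
  have hB3eq : ∀ ω, (βm + c * T ω) ^ 3
      = βm ^ 3 + (3 * βm ^ 2 * c) * T ω + (3 * βm * c ^ 2) * T ω ^ 2
        + c ^ 3 * T ω ^ 3 := fun ω => by ring
  have i30 : Integrable (fun ω => βm ^ 3 + (3 * βm ^ 2 * c) * T ω) Pr :=
    (integrable_const _).add (hTint1.const_mul _)
  have i31 : Integrable (fun ω => βm ^ 3 + (3 * βm ^ 2 * c) * T ω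
      + (3 * βm * c ^ 2) * T ω ^ 2) Pr := i30.add (hTint2.const_mul _)
  have hB3int : Integrable (fun ω => (βm + c * T ω) ^ 3) Pr :=
    (i31.add (hTint3.const_mul (c ^ 3))).congr (ae_of_all _ fun ω => (hB3eq ω).symm)
  have hEB3 : ∫ ω, (βm + c * T ω) ^ 3 ∂Pr = βm ^ 3 + 3 * βm * c ^ 2 * mT2 := by
    rw [integral_congr_ae (ae_of_all _ hB3eq), integral_add i31 (hTint3.const_mul _),
      integral_add i30 (hTint2.const_mul _),
      integral_add (integrable_const _) (hTint1.const_mul _), integral_const,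
      integral_const_mul, integral_const_mul, integral_const_mul, hET1, hET2, hET3]
    simp [hmT2]
    try ring
  -- independence of powers
  have hindk : ∀ k : ℕ, IndepFun (fun ω => θhat ω ^ k) (fun ω => (βm + c * T ω) ^ k) Pr := by
    intro k
    exact hind.comp (measurable_id.pow_const k)
      ((measurable_const.add (measurable_id.const_mul c)).pow_const k)
  have hγeq : ∀ (k : ℕ) ω, γhat ω ^ k = (θhat ω ^ k) * ((βm + c * T ω) ^ k) := by
    intro k ω
    rw [hγ ω, mul_pow]
  have hγ1int : Integrable (fun ω => γhat ω) Pr := by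
    have := (hindk 1).integrable_mul (by simpa using hθint1) (by simpa using hB1int)
    refine this.congr (ae_of_all _ fun ω => ?_)
    simp [Pi.mul_apply, hγ ω, mul_pow]
  have hγ2int : Integrable (fun ω => γhat ω ^ 2) Pr := by
    have := (hindk 2).integrable_mul hθint2 hB2int
    refine this.congr (ae_of_all _ fun ω => ?_)
    simp [Pi.mul_apply, hγ ω, mul_pow]
  have hγ3int : Integrable (fun ω => γhat ω ^ 3) Pr := by
    have := (hindk 3).integrable_mul hθint3 hB3int
    refine this.congr (ae_of_all _ fun ω => ?_)
    simp [Pi.mul_apply, hγ ω, mul_pow]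
  have hEγ1 : ∫ ω, γhat ω ∂Pr = θx * βm := by
    have h := (hindk 1).integral_mul_eq_mul_integral (by simpa using hθint1.aestronglyMeasurable)
      (by simpa using hB1int.aestronglyMeasurable)
    have h2 : ∫ ω, γhat ω ∂Pr
        = ∫ ω, (θhat ω ^ 1) * ((βm + c * T ω) ^ 1) ∂Pr :=
      integral_congr_ae (ae_of_all _ fun ω => by simpa using hγeq 1 ω)
    rw [h2]
    rw [show (∫ ω, (θhat ω ^ 1) * ((βm + c * T ω) ^ 1) ∂Pr)
      = ∫ ω, ((fun ω => θhat ω ^ 1) * fun ω => (βm + c * T ω) ^ 1) ω ∂Pr from rfl, h]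
    simp only [pow_one]
    rw [hEθ1, hEB1]
  have hEγ2 : ∫ ω, γhat ω ^ 2 ∂Pr = ((v:ℝ) + θx ^ 2) * (βm ^ 2 + c ^ 2 * mT2) := by
    have h := (hindk 2).integral_mul_eq_mul_integral hθint2.aestronglyMeasurable hB2int.aestronglyMeasurable
    have h2 : ∫ ω, γhat ω ^ 2 ∂Pr
        = ∫ ω, (θhat ω ^ 2) * ((βm + c * T ω) ^ 2) ∂Pr :=
      integral_congr_ae (ae_of_all _ fun ω => hγeq 2 ω)
    rw [h2, show (∫ ω, (θhat ω ^ 2) * ((βm + c * T ω) ^ 2) ∂Pr)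
      = ∫ ω, ((fun ω => θhat ω ^ 2) * fun ω => (βm + c * T ω) ^ 2) ω ∂Pr from rfl, h,
      hEθ2, hEB2]
  have hEγ3 : ∫ ω, γhat ω ^ 3 ∂Pr
      = (3 * (v:ℝ) * θx + θx ^ 3) * (βm ^ 3 + 3 * βm * c ^ 2 * mT2) := by
    have h := (hindk 3).integral_mul_eq_mul_integral hθint3.aestronglyMeasurable hB3int.aestronglyMeasurable
    have h2 : ∫ ω, γhat ω ^ 3 ∂Pr
        = ∫ ω, (θhat ω ^ 3) * ((βm + c * T ω) ^ 3) ∂Pr :=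
      integral_congr_ae (ae_of_all _ fun ω => hγeq 3 ω)
    rw [h2, show (∫ ω, (θhat ω ^ 3) * ((βm + c * T ω) ^ 3) ∂Pr)
      = ∫ ω, ((fun ω => θhat ω ^ 3) * fun ω => (βm + c * T ω) ^ 3) ω ∂Pr from rfl, h,
      hEθ3, hEB3]
  -- central third moment
  set m : ℝ := θx * βm with hmdef
  have hmean : ∫ ω', γhat ω' ∂Pr = m := hEγ1
  have hexp : ∀ ω, (γhat ω - m) ^ 3
      = γhat ω ^ 3 - (3 * m) * γhat ω ^ 2 + (3 * m ^ 2) * γhat ω - m ^ 3 :=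
    fun ω => by ring
  have ja : Integrable (fun ω => γhat ω ^ 3 - (3 * m) * γhat ω ^ 2) Pr :=
    hγ3int.sub (hγ2int.const_mul _)
  have jb : Integrable (fun ω => γhat ω ^ 3 - (3 * m) * γhat ω ^ 2
      + (3 * m ^ 2) * γhat ω) Pr := ja.add (hγ1int.const_mul _)
  have hM3 : ∫ ω, (γhat ω - ∫ ω', γhat ω' ∂Pr) ^ 3 ∂Pr
      = (3 * (v:ℝ) * θx + θx ^ 3) * (βm ^ 3 + 3 * βm * c ^ 2 * mT2)
        - 3 * m * (((v:ℝ) + θx ^ 2) * (βm ^ 2 + c ^ 2 * mT2))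
        + 3 * m ^ 2 * m - m ^ 3 := by
    rw [hmean, integral_congr_ae (ae_of_all _ hexp),
      integral_sub jb (integrable_const _), integral_add ja (hγ1int.const_mul _),
      integral_sub hγ3int (hγ2int.const_mul _), integral_const_mul, integral_const_mul,
      integral_const, hEγ1, hEγ2, hEγ3]
    simp
    try ring
  have hval : (3 * (v:ℝ) * θx + θx ^ 3) * (βm ^ 3 + 3 * βm * c ^ 2 * mT2)
        - 3 * m * (((v:ℝ) + θx ^ 2) * (βm ^ 2 + c ^ 2 * mT2))
        + 3 * m ^ 2 * m - m ^ 3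
      = 6 * θx * βm * σu ^ 2 / (((n:ℝ) - 4) * xx) := by
    have hn4 : (n:ℝ) - 4 = ν - 2 := by rw [hνdef]; ring
    rw [hmdef, hvcoe, hc2, hmT2, hn4]
    have hσv' : σv ≠ 0 := hσv.ne'
    have hxx' : xx ≠ 0 := hxx.ne'
    have hν' : ν ≠ 0 := hν0.ne'
    field_simp
    ring
  constructor
  · rw [hM3, hval]
  · rw [hM3, hval]
    have hn42 : (0:ℝ) < (n:ℝ) - 4 := by linarith
    have hfac : 6 * σu ^ 2 / (((n:ℝ) - 4) * xx) ≠ 0 := by positivity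
    rw [show 6 * θx * βm * σu ^ 2 / (((n:ℝ) - 4) * xx)
      = (θx * βm) * (6 * σu ^ 2 / (((n:ℝ) - 4) * xx)) by ring, mul_ne_zero_iff,
      and_iff_left hfac]
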